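/- Let F, M ⊆ Sym(n) be subequations. The following three conditions are equivalent: (i) F + M ⊆ F; (ii) F̃ + M ⊆ F̃; (iii) F + F̃ ⊆ M̃. -/

import Mathlib

open Pointwise

/-- The space of symmetric (self-adjoint) real `n × n` matrices. -/
abbrev SymSpace (n : ℕ) : Type := selfAdjoint (Matrix (Fin n) (Fin n) ℝ)

/-- The cone `P` of positive semidefinite symmetric matrices. -/
def PSDcone (n : ℕ) : Set (SymSpace n) :=
  {A | (A : Matrix (Fin n) (Fin n) ℝ).PosSemidef}

/-- The Dirichlet dual `F̃ = Sym(n) \ (-interior F)`. -/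
def dirDual {n : ℕ} (F : Set (SymSpace n)) : Set (SymSpace n) :=
  {A | -A ∉ interior F}

def epsId (n : ℕ) (ε : ℝ) : SymSpace n :=
  ⟨Matrix.diagonal (fun _ => ε), by
    rw [selfAdjoint.mem_iff]; exact Matrix.isHermitian_diagonal _⟩

lemma epsId_mem_interior {n : ℕ} {ε : ℝ} (hε : 0 < ε) :
    epsId n ε ∈ interior (PSDcone n) := by
  set δ := ε / (n + 1) with hδdef
  have hδ : 0 < δ := by positivity
  set U : Set (SymSpace n) :=
    {B | ∀ i j, |(B : Matrix (Fin n) (Fin n) ℝ) i j - (if i = j then ε else 0)| < δ} with hU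
  have hUopen : IsOpen U := by
    have : U = ⋂ (i) (j), (fun B : SymSpace n => (B : Matrix (Fin n) (Fin n) ℝ) i j) ⁻¹'
        (Metric.ball (if i = j then ε else 0) δ) := by
      ext B
      simp [hU, Real.dist_eq, Set.mem_iInter]
    rw [this]
    exact isOpen_iInter_of_finite fun i => isOpen_iInter_of_finite fun j =>
      Metric.isOpen_ball.preimage
        ((continuous_apply j).comp ((continuous_apply i).comp (continuous_subtype_val : Continuous (fun B : SymSpace n => (B : Matrix (Fin n) (Fin n) ℝ)))))
  have hmem : epsId n ε ∈ U := by
    intro i j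
    simp only [epsId, Matrix.diagonal_apply]
    simpa using hδ
  have hUsub : U ⊆ PSDcone n := by
    intro B hB
    set M : Matrix (Fin n) (Fin n) ℝ := (B : Matrix (Fin n) (Fin n) ℝ) with hM
    refine Matrix.PosSemidef.of_dotProduct_mulVec_nonneg B.prop fun x => ?_
    have hx : star x = x := by funext i; exact star_trivial _
    rw [hx]
    have expand : dotProduct x (M.mulVec x) = ∑ i, ∑ j, x i * (M i j * x j) := by
      simp [dotProduct, Matrix.mulVec, Finset.mul_sum]
    rw [expand]
    set S := ∑ i, x i ^ 2 with hS
    set T := ∑ i, |x i| with hT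
    have hsplit : ∀ i j, x i * (M i j * x j) =
        x i * ((if i = j then ε else 0) * x j) + x i * ((M i j - (if i = j then ε else 0)) * x j) := by
      intro i j; ring
    have e1 : (∑ i, ∑ j, x i * ((if i = j then ε else 0) * x j)) = ε * S := by
      rw [hS, Finset.mul_sum]
      refine Finset.sum_congr rfl fun i _ => ?_
      rw [Finset.sum_eq_single i]
      · simp; ring
      · intro j _ hji; simp [Ne.symm hji]
      · simp
    have key : (∑ i, ∑ j, |x i| * (δ * |x j|)) = δ * T ^ 2 := by
      rw [hT, sq, Finset.sum_mul_sum, Finset.mul_sum]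
      refine Finset.sum_congr rfl fun i _ => ?_
      rw [Finset.mul_sum]
      refine Finset.sum_congr rfl fun j _ => ?_
      ring
    have e2 : -(δ * T ^ 2) ≤ (∑ i, ∑ j, x i * ((M i j - (if i = j then ε else 0)) * x j)) := by
      rw [← key]
      have step : ∀ i j, -( |x i| * (δ * |x j|)) ≤ x i * ((M i j - (if i = j then ε else 0)) * x j) := by
        intro i j
        have h1 : |x i * ((M i j - (if i = j then ε else 0)) * x j)| ≤ |x i| * (δ * |x j|) := by
          rw [abs_mul, abs_mul]
          have h2 : |M i j - (if i = j then ε else 0)| * |x j| ≤ δ * |x j| :=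
            mul_le_mul_of_nonneg_right (hB i j).le (abs_nonneg _)
          exact mul_le_mul_of_nonneg_left h2 (abs_nonneg _)
        linarith [neg_abs_le (x i * ((M i j - (if i = j then ε else 0)) * x j))]
      calc -(∑ i, ∑ j, |x i| * (δ * |x j|))
          = ∑ i, ∑ j, -(|x i| * (δ * |x j|)) := by simp
        _ ≤ ∑ i, ∑ j, x i * ((M i j - (if i = j then ε else 0)) * x j) :=
            Finset.sum_le_sum fun i _ => Finset.sum_le_sum fun j _ => step i j
    have hSnn : 0 ≤ S := Finset.sum_nonneg fun i _ => sq_nonneg _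
    have hT2 : T ^ 2 ≤ n * S := by
      rw [hT, hS]
      calc (∑ i, |x i|) ^ 2 ≤ (Finset.univ : Finset (Fin n)).card * ∑ i, |x i| ^ 2 :=
            sq_sum_le_card_mul_sum_sq
        _ = n * ∑ i, x i ^ 2 := by simp [sq_abs]
    have hδn : δ * n ≤ ε := by
      rw [hδdef, div_mul_eq_mul_div, div_le_iff₀ (by positivity)]
      nlinarith [hε]
    have split : (∑ i, ∑ j, x i * (M i j * x j)) =
        (∑ i, ∑ j, x i * ((if i = j then ε else 0) * x j)) +
        (∑ i, ∑ j, x i * ((M i j - (if i = j then ε else 0)) * x j)) := by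
      rw [← Finset.sum_add_distrib]
      refine Finset.sum_congr rfl fun i _ => ?_
      rw [← Finset.sum_add_distrib]
      exact Finset.sum_congr rfl fun j _ => hsplit i j
    rw [split, e1]
    nlinarith [mul_le_mul_of_nonneg_left hT2 hδ.le, mul_nonneg (sub_nonneg.mpr hδn) hSnn]
  exact interior_maximal hUsub hUopen hmem


/-- Translating an interior point lands in the interior of any superset of the translate. -/
lemma shift_interior {n : ℕ} {S T : Set (SymSpace n)} {c : SymSpace n}
    (h : ∀ s ∈ S, s + c ∈ T) {x : SymSpace n} (hx : x ∈ interior S) : x + c ∈ interior T := by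
  have hopen : IsOpen ((fun y => y + c) '' interior S) :=
    (Homeomorph.addRight c).isOpenMap _ isOpen_interior
  have hsub : (fun y => y + c) '' interior S ⊆ T := by
    rintro _ ⟨y, hy, rfl⟩
    exact h y (interior_subset hy)
  exact interior_maximal hsub hopen ⟨x, hx, rfl⟩

lemma add_eps_mem_interior {n : ℕ} {M : Set (SymSpace n)} (hMp : M + PSDcone n ⊆ M)
    {b : SymSpace n} (hb : b ∈ M) {ε : ℝ} (hε : 0 < ε) : b + epsId n ε ∈ interior M := by
  have hopen : IsOpen (M + interior (PSDcone n)) := isOpen_interior.add_left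
  have hsub : M + interior (PSDcone n) ⊆ M := by
    rintro _ ⟨a, ha, p, hp, rfl⟩
    exact hMp (Set.add_mem_add ha (interior_subset hp))
  exact interior_maximal hsub hopen (Set.add_mem_add hb (epsId_mem_interior hε))

lemma mem_closure_interior {n : ℕ} {M : Set (SymSpace n)} (hMp : M + PSDcone n ⊆ M)
    {b : SymSpace n} (hb : b ∈ M) : b ∈ closure (interior M) := by
  have hc : Continuous fun ε : ℝ => epsId n ε := by
    apply Continuous.subtype_mk
    refine continuous_pi fun i => continuous_pi fun j => ?_
    simp only [Matrix.diagonal_apply]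
    split_ifs with h
    · exact continuous_id
    · exact continuous_const
  have h0 : epsId n 0 = 0 := Subtype.ext (by simp [epsId])
  have htend : Filter.Tendsto (fun ε : ℝ => b + epsId n ε) (nhdsWithin 0 (Set.Ioi 0)) (nhds b) := by
    have h1 : Filter.Tendsto (fun ε : ℝ => b + epsId n ε) (nhds 0) (nhds (b + epsId n 0)) :=
      (continuous_const.add hc).tendsto 0
    rw [h0, add_zero] at h1
    exact h1.mono_left nhdsWithin_le_nhds
  refine mem_closure_of_tendsto htend ?_
  filter_upwards [self_mem_nhdsWithin] with ε hε using add_eps_mem_interior hMp hb hε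

/-- The basic reformulation: `F + M ⊆ F` iff `F + interior M ⊆ interior F`. -/
lemma iff_int {n : ℕ} {F M : Set (SymSpace n)} (hFc : IsClosed F)
    (hMp : M + PSDcone n ⊆ M) :
    F + M ⊆ F ↔ F + interior M ⊆ interior F := by
  constructor
  · intro h
    rintro _ ⟨a, ha, b, hb, rfl⟩
    have : b + a ∈ interior F := by
      refine shift_interior (fun s hs => ?_) hb
      have := h (Set.add_mem_add ha hs)
      rwa [add_comm] at this
    rwa [add_comm] at this
  · intro h
    rintro _ ⟨a, ha, b, hb, rfl⟩
    have hcl : a + b ∈ closure F := by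
      have hb' : b ∈ closure (interior M) := mem_closure_interior hMp hb
      have himg : a + b ∈ closure ((fun y => a + y) '' interior M) :=
        image_closure_subset_closure_image (continuous_const.add continuous_id) ⟨b, hb', rfl⟩
      have hsub : (fun y => a + y) '' interior M ⊆ F := by
        rintro _ ⟨y, hy, rfl⟩
        exact interior_subset (h (Set.add_mem_add ha hy))
      exact closure_mono hsub himg
    rwa [hFc.closure_eq] at hcl
  
/-- `F + F̃ ⊆ M̃` iff `F + interior M ⊆ interior F`, purely formally. -/
lemma iii_iff {n : ℕ} (F M : Set (SymSpace n)) :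
    F + dirDual F ⊆ dirDual M ↔ F + interior M ⊆ interior F := by
  constructor
  · intro h
    rintro _ ⟨a, ha, c, hc, rfl⟩
    by_contra hnot
    have hb : -(a + c) ∈ dirDual F := by
      simp only [dirDual, Set.mem_setOf_eq, neg_neg]
      exact hnot
    have := h (Set.add_mem_add ha hb)
    simp only [dirDual, Set.mem_setOf_eq] at this
    apply this
    have : -(a + -(a + c)) = c := by abel
    rwa [this]
  · intro h
    rintro _ ⟨a, ha, b, hb, rfl⟩
    simp only [dirDual, Set.mem_setOf_eq]
    intro hmem
    have h2 := h (Set.add_mem_add ha hmem)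
    have : a + -(a + b) = -b := by abel
    rw [this] at h2
    exact hb h2

lemma dirDual_closed {n : ℕ} (F : Set (SymSpace n)) : IsClosed (dirDual F) := by
  have : dirDual F = ((fun A : SymSpace n => -A) ⁻¹' interior F)ᶜ := rfl
  rw [this]
  exact (isOpen_interior.preimage continuous_neg).isClosed_compl

lemma dirDual_dirDual {n : ℕ} {F : Set (SymSpace n)} (hFc : IsClosed F)
    (hFp : F + PSDcone n ⊆ F) : dirDual (dirDual F) = F := by
  have hcl : closure (interior F) = F := by
    apply le_antisymm
    · calc closure (interior F) ⊆ closure F := closure_mono interior_subset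
        _ = F := hFc.closure_eq
    · intro a ha
      exact mem_closure_interior hFp ha
  have hneg : (Homeomorph.neg (SymSpace n) : SymSpace n → SymSpace n) = fun A => -A := rfl
  have hint : interior (dirDual F) = ((fun A : SymSpace n => -A) ⁻¹' F)ᶜ := by
    have h1 : dirDual F = ((fun A : SymSpace n => -A) ⁻¹' interior F)ᶜ := rfl
    rw [h1, interior_compl]
    congr 1
    calc closure ((fun A : SymSpace n => -A) ⁻¹' interior F)
        = (fun A : SymSpace n => -A) ⁻¹' closure (interior F) := by
          rw [← hneg, (Homeomorph.neg (SymSpace n)).preimage_closure]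
      _ = (fun A : SymSpace n => -A) ⁻¹' F := by rw [hcl]
  ext A
  show -A ∉ interior (dirDual F) ↔ A ∈ F
  rw [hint]
  simp

/-- For subequations `F, M ⊆ Sym(n)`, the conditions `F + M ⊆ F`, `F̃ + M ⊆ F̃`, and
`F + F̃ ⊆ M̃` are equivalent. -/
theorem monotonicity_equivalences (n : ℕ) (F M : Set (SymSpace n))
    (hFc : IsClosed F) (hFp : F + PSDcone n ⊆ F)
    (hMc : IsClosed M) (hMp : M + PSDcone n ⊆ M) :
    (F + M ⊆ F ↔ dirDual F + M ⊆ dirDual F) ∧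
      (F + M ⊆ F ↔ F + dirDual F ⊆ dirDual M) := by
  have h1 : F + M ⊆ F ↔ F + interior M ⊆ interior F := iff_int hFc hMp
  have h3 : F + dirDual F ⊆ dirDual M ↔ F + interior M ⊆ interior F := iii_iff F M
  have h2 : dirDual F + M ⊆ dirDual F ↔
      dirDual F + interior M ⊆ interior (dirDual F) := iff_int (dirDual_closed F) hMp
  have h3' : dirDual F + dirDual (dirDual F) ⊆ dirDual M ↔
      dirDual F + interior M ⊆ interior (dirDual F) := iii_iff (dirDual F) M
  rw [dirDual_dirDual hFc hFp] at h3'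
  have hcomm : dirDual F + F = F + dirDual F := add_comm _ _
  rw [hcomm] at h3'
  constructor
  · rw [h1, h2, ← h3, ← h3']
  · rw [h1, ← h3]
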